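/- Classical Newton–Wigner theorem for spin-zero elementary systems: On Γ = ℝ³ × ℝ³ with the canonical Poisson bracket, let X : ℝ³ × ℝ³ → ℝ³ be a C¹ map satisfying (i) {X^a, P_b} = δ^a_b for all a,b; (ii) {J_{ab}, X^c} = δ_a^c X_b − δ_b^c X_a for all a,b,c (X transforms as a position vector under rotations); and (iii) X(x, −p) = X(x, p) for all (x,p) (invariance under time reversal). Then X(x,p) = x for all (x,p) ∈ ℝ³ × ℝ³. (In the spin-zero case, Poisson-commutativity of the components of X is not needed.) -/

import Mathlib

noncomputable section

open scoped BigOperators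

/-- The phase space `Γ = ℝ³ × ℝ³` with points `(x, p)`. -/
abbrev Phase := (Fin 3 → ℝ) × (Fin 3 → ℝ)

/-- The canonical Poisson bracket
`{f,g} = Σ_a (∂f/∂x^a · ∂g/∂p_a − ∂f/∂p_a · ∂g/∂x^a)` on `Γ = ℝ³ × ℝ³`. -/
def pb (f g : Phase → ℝ) (z : Phase) : ℝ :=
  ∑ a : Fin 3,
    (fderiv ℝ f z ((Pi.single a 1 : Fin 3 → ℝ), (0 : Fin 3 → ℝ))
        * fderiv ℝ g z ((0 : Fin 3 → ℝ), (Pi.single a 1 : Fin 3 → ℝ))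
      - fderiv ℝ f z ((0 : Fin 3 → ℝ), (Pi.single a 1 : Fin 3 → ℝ))
        * fderiv ℝ g z ((Pi.single a 1 : Fin 3 → ℝ), (0 : Fin 3 → ℝ)))

open Real



def rot (a b : Fin 3) (t : ℝ) (v : Fin 3 → ℝ) : Fin 3 → ℝ :=
  fun i => if i = a then Real.cos t * v a - Real.sin t * v b
    else if i = b then Real.sin t * v a + Real.cos t * v b
    else v i

lemma rot_apply_a (a b : Fin 3) (t : ℝ) (v : Fin 3 → ℝ) :
    rot a b t v a = Real.cos t * v a - Real.sin t * v b := by simp [rot]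

lemma rot_apply_b (a b : Fin 3) (hab : a ≠ b) (t : ℝ) (v : Fin 3 → ℝ) :
    rot a b t v b = Real.sin t * v a + Real.cos t * v b := by
  simp [rot, Ne.symm hab]

lemma rot_apply_other (a b i : Fin 3) (hia : i ≠ a) (hib : i ≠ b) (t : ℝ) (v : Fin 3 → ℝ) :
    rot a b t v i = v i := by simp [rot, hia, hib]

lemma rot_zero_vec (a b : Fin 3) (t : ℝ) : rot a b t (0 : Fin 3 → ℝ) = 0 := by
  funext i; simp [rot]

lemma rot_time_zero (a b : Fin 3) (v : Fin 3 → ℝ) : rot a b 0 v = v := by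
  funext i
  by_cases h1 : i = a
  · subst h1; simp [rot_apply_a]
  · by_cases h2 : i = b
    · subst h2; simp [rot, h1]
    · simp [rot, h1, h2]

lemma solve1 (u v A B cs sn : ℝ) (h1 : sn ^ 2 + cs ^ 2 = 1)
    (h2 : cs * u + sn * v = A) (h3 : cs * v - sn * u = B) : u = cs * A - sn * B := by
  linear_combination cs * h2 - sn * h3 - u * h1

lemma solve2 (u v A B cs sn : ℝ) (h1 : sn ^ 2 + cs ^ 2 = 1)
    (h2 : cs * u + sn * v = A) (h3 : cs * v - sn * u = B) : v = sn * A + cs * B := by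
  linear_combination sn * h2 + cs * h3 - v * h1

lemma equivariance (g : (Fin 3 → ℝ) → Fin 3 → ℝ)
    (hg : ∀ c : Fin 3, Differentiable ℝ (fun q => g q c))
    (hPDE : ∀ a b c : Fin 3, ∀ p : Fin 3 → ℝ,
      p b * fderiv ℝ (fun q => g q c) p (Pi.single a 1)
        - p a * fderiv ℝ (fun q => g q c) p (Pi.single b 1)
        = (if a = c then g p b else 0) - (if b = c then g p a else 0))
    (a b : Fin 3) (hab : a ≠ b) (t : ℝ) (p : Fin 3 → ℝ) :
    g (rot a b t p) = rot a b t (g p) := by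
  -- derivative of the rotated point
  have hq : ∀ s : ℝ, HasDerivAt (fun s => rot a b s p)
      (fun i => if i = a then -(rot a b s p b) else if i = b then rot a b s p a else 0) s := by
    intro s
    rw [hasDerivAt_pi]
    intro i
    by_cases h1 : i = a
    · subst h1
      have h : HasDerivAt (fun s => Real.cos s * p i - Real.sin s * p b)
          (-Real.sin s * p i - Real.cos s * p b) s :=
        ((Real.hasDerivAt_cos s).mul_const (p i)).sub ((Real.hasDerivAt_sin s).mul_const (p b))
      have he : (fun s => rot i b s p i) = fun s => Real.cos s * p i - Real.sin s * p b := by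
        funext s; rw [rot_apply_a]
      rw [he]
      refine h.congr_deriv ?_
      rw [if_pos rfl, rot_apply_b i b hab]
      ring
    · by_cases h2 : i = b
      · subst h2
        have h : HasDerivAt (fun s => Real.sin s * p a + Real.cos s * p i)
            (Real.cos s * p a + -Real.sin s * p i) s :=
          ((Real.hasDerivAt_sin s).mul_const (p a)).add ((Real.hasDerivAt_cos s).mul_const (p i))
        have he : (fun s => rot a i s p i) = fun s => Real.sin s * p a + Real.cos s * p i := by
          funext s; rw [rot_apply_b a i hab]
        rw [he]
        refine h.congr_deriv ?_
        rw [if_neg h1, if_pos rfl, rot_apply_a]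
        ring
      · have he : (fun s => rot a b s p i) = fun _ => p i := by
          funext s; rw [rot_apply_other a b i h1 h2]
        rw [he]
        convert hasDerivAt_const s (p i) using 1
        rw [if_neg h1, if_neg h2]
  -- the component ODE system
  have hode : ∀ (c : Fin 3) (s : ℝ), HasDerivAt (fun s => g (rot a b s p) c)
      ((if b = c then g (rot a b s p) a else 0) - (if a = c then g (rot a b s p) b else 0)) s := by
    intro c s
    have hL : HasFDerivAt (fun q => g q c)
        (fderiv ℝ (fun q => g q c) (rot a b s p)) (rot a b s p) :=
      ((hg c) (rot a b s p)).hasFDerivAt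
    have hcomp' := hL.comp_hasDerivAt s (hq s)
    have hcomp : HasDerivAt (fun s => g (rot a b s p) c)
        ((fderiv ℝ (fun q => g q c) (rot a b s p))
          (fun i => if i = a then -(rot a b s p b) else if i = b then rot a b s p a else 0)) s :=
      hcomp'
    have hwdec : (fun i => if i = a then -(rot a b s p b) else if i = b then rot a b s p a else 0)
        = (-(rot a b s p b)) • (Pi.single a 1 : Fin 3 → ℝ)
          + (rot a b s p a) • (Pi.single b 1 : Fin 3 → ℝ) := by
      funext i
      simp only [Pi.add_apply, Pi.smul_apply, Pi.single_apply, smul_eq_mul]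
      by_cases h1 : i = a
      · subst h1; rw [if_pos rfl, if_pos rfl, if_neg hab]; ring
      · by_cases h2 : i = b
        · subst h2; rw [if_neg h1, if_pos rfl, if_neg h1, if_pos rfl]; ring
        · rw [if_neg h1, if_neg h2, if_neg h1, if_neg h2]; ring
    have hval : (fderiv ℝ (fun q => g q c) (rot a b s p))
          (fun i => if i = a then -(rot a b s p b) else if i = b then rot a b s p a else 0)
        = (if b = c then g (rot a b s p) a else 0) - (if a = c then g (rot a b s p) b else 0) := by
      rw [hwdec, map_add, map_smul, map_smul]
      have h := hPDE a b c (rot a b s p)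
      simp only [smul_eq_mul]
      linarith [h]
    rw [hval] at hcomp
    exact hcomp
  -- specialize
  have hda : ∀ s : ℝ, HasDerivAt (fun s => g (rot a b s p) a) (-(g (rot a b s p) b)) s := by
    intro s
    have h := hode a s
    rw [if_neg (Ne.symm hab), if_pos rfl, zero_sub] at h
    exact h
  have hdb : ∀ s : ℝ, HasDerivAt (fun s => g (rot a b s p) b) (g (rot a b s p) a) s := by
    intro s
    have h := hode b s
    rw [if_pos rfl, if_neg hab, sub_zero] at h
    exact h
  -- conserved combinations
  have hA : ∀ s : ℝ, HasDerivAt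
      (fun s => Real.cos s * g (rot a b s p) a + Real.sin s * g (rot a b s p) b) 0 s := by
    intro s
    have h := ((Real.hasDerivAt_cos s).mul (hda s)).add ((Real.hasDerivAt_sin s).mul (hdb s))
    refine h.congr_deriv ?_
    ring
  have hB : ∀ s : ℝ, HasDerivAt
      (fun s => Real.cos s * g (rot a b s p) b - Real.sin s * g (rot a b s p) a) 0 s := by
    intro s
    have h := ((Real.hasDerivAt_cos s).mul (hdb s)).sub ((Real.hasDerivAt_sin s).mul (hda s))
    refine h.congr_deriv ?_
    ring
  have hAc : ∀ s : ℝ,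
      Real.cos s * g (rot a b s p) a + Real.sin s * g (rot a b s p) b = g p a := by
    intro s
    have h := is_const_of_deriv_eq_zero (f := fun s =>
        Real.cos s * g (rot a b s p) a + Real.sin s * g (rot a b s p) b)
      (fun s => (hA s).differentiableAt) (fun s => (hA s).deriv) s 0
    simpa [rot_time_zero] using h
  have hBc : ∀ s : ℝ,
      Real.cos s * g (rot a b s p) b - Real.sin s * g (rot a b s p) a = g p b := by
    intro s
    have h := is_const_of_deriv_eq_zero (f := fun s =>
        Real.cos s * g (rot a b s p) b - Real.sin s * g (rot a b s p) a)
      (fun s => (hB s).differentiableAt) (fun s => (hB s).deriv) s 0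
    simpa [rot_time_zero] using h
  have hpyth := Real.sin_sq_add_cos_sq t
  funext i
  by_cases h1 : i = a
  · subst h1
    rw [rot_apply_a]
    exact solve1 _ _ _ _ _ _ hpyth (hAc t) (hBc t)
  · by_cases h2 : i = b
    · subst h2
      rw [rot_apply_b a i hab]
      exact solve2 _ _ _ _ _ _ hpyth (hAc t) (hBc t)
    · rw [rot_apply_other a b i h1 h2]
      have hdc : ∀ s : ℝ, HasDerivAt (fun s => g (rot a b s p) i) 0 s := by
        intro s
        have h := hode i s
        rw [if_neg (fun h => h2 h.symm), if_neg (fun h => h1 h.symm), sub_zero] at h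
        exact h
      have h := is_const_of_deriv_eq_zero (f := fun s => g (rot a b s p) i)
        (fun s => (hdc s).differentiableAt) (fun s => (hdc s).deriv) t 0
      simpa [rot_time_zero] using h

lemma clm_pair (L : Phase →L[ℝ] ℝ) (u v : Fin 3 → ℝ) :
    L (u, v) = (∑ e : Fin 3, u e * L (Pi.single e 1, 0))
      + ∑ e : Fin 3, v e * L (0, Pi.single e 1) := by
  have h : ((u, v) : Phase)
      = (∑ e : Fin 3, u e • ((Pi.single e 1 : Fin 3 → ℝ), (0 : Fin 3 → ℝ)))
        + ∑ e : Fin 3, v e • ((0 : Fin 3 → ℝ), (Pi.single e 1 : Fin 3 → ℝ)) := by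
    apply Prod.ext
    · simp only [Prod.fst_add, Prod.fst_sum, Prod.smul_fst, smul_zero,
        Finset.sum_const_zero, add_zero]
      funext i
      simp [Finset.sum_apply, Pi.single_apply, mul_ite, Finset.sum_ite_eq]
    · simp only [Prod.snd_add, Prod.snd_sum, Prod.smul_snd, smul_zero,
        Finset.sum_const_zero, zero_add]
      funext i
      simp [Finset.sum_apply, Pi.single_apply, mul_ite, Finset.sum_ite_eq]
  have hsm1 : ∀ (c : ℝ) (w : Fin 3 → ℝ), L (c • w, 0) = c * L (w, 0) := by
    intro c w
    rw [show ((c • w, (0 : Fin 3 → ℝ)) : Phase) = c • ((w, (0 : Fin 3 → ℝ)) : Phase) by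
      rw [Prod.smul_mk, smul_zero], map_smul, smul_eq_mul]
  have hsm2 : ∀ (c : ℝ) (w : Fin 3 → ℝ), L (0, c • w) = c * L (0, w) := by
    intro c w
    rw [show (((0 : Fin 3 → ℝ), c • w) : Phase) = c • (((0 : Fin 3 → ℝ), w) : Phase) by
      rw [Prod.smul_mk, smul_zero], map_smul, smul_eq_mul]
  rw [h, map_add, map_sum, map_sum]
  simp [Prod.smul_mk, smul_zero, hsm1, hsm2]

set_option maxHeartbeats 1000000 in
/-- **Classical Newton–Wigner theorem for spin-zero elementary systems**: a `C¹` map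
`X : ℝ³ × ℝ³ → ℝ³` satisfying the canonical Poisson relations with the translation generators,
transforming as a position vector under rotations, and invariant under time reversal, is the
canonical position `X(x,p) = x`. -/
theorem classical_newton_wigner_spin_zero
    (X : Phase → Fin 3 → ℝ) (hC1 : ContDiff ℝ 1 X)
    (htrans : ∀ a b : Fin 3, ∀ z : Phase,
      pb (fun w => X w a) (fun w => w.2 b) z = if a = b then 1 else 0)
    (hrot : ∀ a b c : Fin 3, ∀ z : Phase,
      pb (fun w => w.1 a * w.2 b - w.1 b * w.2 a) (fun w => X w c) z
        = (if a = c then X z b else 0) - (if b = c then X z a else 0))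
    (hT : ∀ x p : Fin 3 → ℝ, X (x, -p) = X (x, p)) :
    ∀ z : Phase, X z = z.1 := by
  classical
  have hXd : ∀ c : Fin 3, Differentiable ℝ (fun w : Phase => X w c) := by
    intro c
    exact (ContinuousLinearMap.proj c : ((Fin 3 → ℝ)) →L[ℝ] ℝ).differentiable.comp
      (hC1.differentiable one_ne_zero)
  -- Step 1 : spatial derivatives of X are the identity
  have hx : ∀ a b : Fin 3, ∀ z : Phase,
      fderiv ℝ (fun w => X w a) z ((Pi.single b 1 : Fin 3 → ℝ), (0 : Fin 3 → ℝ))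
        = if a = b then 1 else 0 := by
    intro a b z
    have h := htrans a b z
    have hP : ∀ u v : Fin 3 → ℝ, fderiv ℝ (fun w : Phase => w.2 b) z (u, v) = v b := by
      intro u v
      have hd : HasFDerivAt (fun w : Phase => w.2 b)
          ((ContinuousLinearMap.proj b).comp
            (ContinuousLinearMap.snd ℝ (Fin 3 → ℝ) (Fin 3 → ℝ))) z :=
        ((ContinuousLinearMap.proj b).comp
          (ContinuousLinearMap.snd ℝ (Fin 3 → ℝ) (Fin 3 → ℝ))).hasFDerivAt
      rw [hd.fderiv]
      rfl
    rw [pb] at h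
    simp only [hP, Pi.zero_apply, mul_zero, sub_zero, Pi.single_apply, mul_ite,
      mul_one, Finset.sum_ite_eq, Finset.mem_univ, if_true] at h
    exact h
  -- Step 2 : splitting X (x,p) = x + X (0,p)
  have hsplit : ∀ z : Phase, ∀ c : Fin 3, X z c = z.1 c + X (0, z.2) c := by
    rintro ⟨x, p⟩ c
    have hφ : ∀ y : Fin 3 → ℝ, HasFDerivAt (fun x : Fin 3 → ℝ => X (x, p) c - x c)
        ((fderiv ℝ (fun w => X w c) (y, p)).comp
          ((ContinuousLinearMap.id ℝ (Fin 3 → ℝ)).prod 0)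
          - ContinuousLinearMap.proj c) y := by
      intro y
      have h1 : HasFDerivAt (fun x : Fin 3 → ℝ => ((x, p) : Phase))
          ((ContinuousLinearMap.id ℝ (Fin 3 → ℝ)).prod 0) y :=
        (hasFDerivAt_id y).prodMk (hasFDerivAt_const p y)
      have h2 := ((hXd c) (y, p)).hasFDerivAt.comp y h1
      exact h2.sub (ContinuousLinearMap.proj c : (Fin 3 → ℝ) →L[ℝ] ℝ).hasFDerivAt
    have hzero : ∀ y : Fin 3 → ℝ,
        (fderiv ℝ (fun w => X w c) (y, p)).comp
          ((ContinuousLinearMap.id ℝ (Fin 3 → ℝ)).prod 0)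
          - ContinuousLinearMap.proj c = 0 := by
      intro y
      apply ContinuousLinearMap.ext
      intro u
      simp only [ContinuousLinearMap.sub_apply, ContinuousLinearMap.comp_apply,
        ContinuousLinearMap.prod_apply, ContinuousLinearMap.id_apply,
        ContinuousLinearMap.zero_apply, ContinuousLinearMap.proj_apply]
      rw [clm_pair]
      simp [hx, Pi.single_apply, mul_ite, Finset.sum_ite_eq]
    have hφ0 : ∀ y : Fin 3 → ℝ,
        HasFDerivAt (fun x : Fin 3 → ℝ => X (x, p) c - x c)
          (0 : (Fin 3 → ℝ) →L[ℝ] ℝ) y := by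
      intro y
      have h := hφ y
      rw [hzero y] at h
      exact h
    have hdiff : Differentiable ℝ (fun x : Fin 3 → ℝ => X (x, p) c - x c) :=
      fun y => (hφ0 y).differentiableAt
    have hfz : ∀ y, fderiv ℝ (fun x : Fin 3 → ℝ => X (x, p) c - x c) y = 0 :=
      fun y => (hφ0 y).fderiv
    have hconst := is_const_of_fderiv_eq_zero hdiff hfz x 0
    simp only [Pi.zero_apply] at hconst
    have : X (x, p) c - x c = X (0, p) c - 0 := by simpa using hconst
    simp only []
    linarith [this]
  -- Step 3 : differentiability of g and the PDE
  have hgd : ∀ c : Fin 3, Differentiable ℝ (fun q : Fin 3 → ℝ => X (0, q) c) := by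
    intro c
    exact (hXd c).comp ((differentiable_const (0 : Fin 3 → ℝ)).prodMk differentiable_id)
  have hgfd : ∀ (c : Fin 3) (q : Fin 3 → ℝ),
      HasFDerivAt (fun q : Fin 3 → ℝ => X (0, q) c)
        ((fderiv ℝ (fun w => X w c) ((0 : Fin 3 → ℝ), q)).comp
          ((0 : (Fin 3 → ℝ) →L[ℝ] (Fin 3 → ℝ)).prod (ContinuousLinearMap.id ℝ (Fin 3 → ℝ)))) q := by
    intro c q
    have h1 : HasFDerivAt (fun q : Fin 3 → ℝ => (((0 : Fin 3 → ℝ), q) : Phase))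
        ((0 : (Fin 3 → ℝ) →L[ℝ] (Fin 3 → ℝ)).prod (ContinuousLinearMap.id ℝ (Fin 3 → ℝ))) q :=
      (hasFDerivAt_const (0 : Fin 3 → ℝ) q).prodMk (hasFDerivAt_id q)
    exact ((hXd c) ((0 : Fin 3 → ℝ), q)).hasFDerivAt.comp q h1
  have hPDE : ∀ a b c : Fin 3, ∀ q : Fin 3 → ℝ,
      q b * fderiv ℝ (fun q : Fin 3 → ℝ => X (0, q) c) q (Pi.single a 1)
        - q a * fderiv ℝ (fun q : Fin 3 → ℝ => X (0, q) c) q (Pi.single b 1)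
        = (if a = c then X (0, q) b else 0) - (if b = c then X (0, q) a else 0) := by
    intro a b c q
    -- derivative of the angular-momentum function at (0, q)
    have hJm : ∀ u v : Fin 3 → ℝ,
        fderiv ℝ (fun w : Phase => w.1 a * w.2 b - w.1 b * w.2 a) ((0 : Fin 3 → ℝ), q) (u, v)
          = u a * q b - u b * q a := by
      intro u v
      have hxa : HasFDerivAt (fun w : Phase => w.1 a)
          ((ContinuousLinearMap.proj a).comp
            (ContinuousLinearMap.fst ℝ (Fin 3 → ℝ) (Fin 3 → ℝ))) (((0 : Fin 3 → ℝ), q) : Phase) :=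
        ((ContinuousLinearMap.proj a).comp
          (ContinuousLinearMap.fst ℝ (Fin 3 → ℝ) (Fin 3 → ℝ))).hasFDerivAt
      have hxb : HasFDerivAt (fun w : Phase => w.1 b)
          ((ContinuousLinearMap.proj b).comp
            (ContinuousLinearMap.fst ℝ (Fin 3 → ℝ) (Fin 3 → ℝ))) (((0 : Fin 3 → ℝ), q) : Phase) :=
        ((ContinuousLinearMap.proj b).comp
          (ContinuousLinearMap.fst ℝ (Fin 3 → ℝ) (Fin 3 → ℝ))).hasFDerivAt
      have hpa : HasFDerivAt (fun w : Phase => w.2 a)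
          ((ContinuousLinearMap.proj a).comp
            (ContinuousLinearMap.snd ℝ (Fin 3 → ℝ) (Fin 3 → ℝ))) (((0 : Fin 3 → ℝ), q) : Phase) :=
        ((ContinuousLinearMap.proj a).comp
          (ContinuousLinearMap.snd ℝ (Fin 3 → ℝ) (Fin 3 → ℝ))).hasFDerivAt
      have hpb : HasFDerivAt (fun w : Phase => w.2 b)
          ((ContinuousLinearMap.proj b).comp
            (ContinuousLinearMap.snd ℝ (Fin 3 → ℝ) (Fin 3 → ℝ))) (((0 : Fin 3 → ℝ), q) : Phase) :=
        ((ContinuousLinearMap.proj b).comp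
          (ContinuousLinearMap.snd ℝ (Fin 3 → ℝ) (Fin 3 → ℝ))).hasFDerivAt
      have hJ : HasFDerivAt (fun w : Phase => w.1 a * w.2 b - w.1 b * w.2 a) _
          (((0 : Fin 3 → ℝ), q) : Phase) := (hxa.mul hpb).sub (hxb.mul hpa)
      rw [hJ.fderiv]
      simp only [ContinuousLinearMap.sub_apply, ContinuousLinearMap.add_apply,
        ContinuousLinearMap.smul_apply, ContinuousLinearMap.comp_apply,
        ContinuousLinearMap.proj_apply, smul_eq_mul, Pi.zero_apply]
      have e1 : (ContinuousLinearMap.fst ℝ (Fin 3 → ℝ) (Fin 3 → ℝ)) (u, v) = u := rfl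
      have e2 : (ContinuousLinearMap.snd ℝ (Fin 3 → ℝ) (Fin 3 → ℝ)) (u, v) = v := rfl
      rw [e1, e2]
      ring
    have h := hrot a b c ((0 : Fin 3 → ℝ), q)
    rw [pb] at h
    simp only [hJm, Pi.single_apply, Pi.zero_apply] at h
    simp only [ite_mul, one_mul, zero_mul, sub_mul, zero_sub, sub_zero, mul_zero,
      neg_mul] at h
    rw [Finset.sum_sub_distrib] at h
    simp only [Finset.sum_ite_eq, Finset.mem_univ, if_true] at h
    -- rewrite goal derivatives via hgfd
    have hfd : fderiv ℝ (fun q : Fin 3 → ℝ => X (0, q) c) q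
        = (fderiv ℝ (fun w => X w c) ((0 : Fin 3 → ℝ), q)).comp
          ((0 : (Fin 3 → ℝ) →L[ℝ] (Fin 3 → ℝ)).prod (ContinuousLinearMap.id ℝ (Fin 3 → ℝ))) :=
      (hgfd c q).fderiv
    rw [hfd]
    simp only [ContinuousLinearMap.comp_apply, ContinuousLinearMap.prod_apply,
      ContinuousLinearMap.zero_apply, ContinuousLinearMap.id_apply]
    linarith [h]

  -- Step 4 : time reversal for g
  have hgT : ∀ q : Fin 3 → ℝ, X (0, -q) = X (0, q) := fun q => hT 0 q
  -- Step 5 : g vanishes on the third axis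
  have claimA : ∀ r : ℝ, X (0, fun i : Fin 3 => if i = 2 then r else 0) = 0 := by
    intro r
    set ζ : Fin 3 → ℝ := fun i : Fin 3 => if i = 2 then r else 0 with hζ
    have hζ2 : ζ 2 = r := by simp [hζ]
    have hζ0 : ζ 0 = 0 := by simp [hζ]
    have hζ1 : ζ 1 = 0 := by simp [hζ]
    have h01 : rot 0 1 (π/2) ζ = ζ := by
      funext i
      by_cases h1 : i = 0
      · subst h1; rw [rot_apply_a, hζ0, hζ1]; ring
      · by_cases h2 : i = 1
        · subst h2; rw [rot_apply_b 0 1 (by decide), hζ0, hζ1]; ring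
        · rw [rot_apply_other 0 1 i h1 h2]
    have heq1 := equivariance (fun q => X (0, q)) hgd hPDE 0 1 (by decide) (π/2) ζ
    rw [h01] at heq1
    have hv0 : X (0, ζ) 0 = -(X (0, ζ) 1) := by
      have := congrFun heq1 0
      rw [rot_apply_a, Real.cos_pi_div_two, Real.sin_pi_div_two] at this
      linarith [this]
    have hv1 : X (0, ζ) 1 = X (0, ζ) 0 := by
      have := congrFun heq1 1
      rw [rot_apply_b 0 1 (by decide), Real.cos_pi_div_two, Real.sin_pi_div_two] at this
      linarith [this]
    have hv0z : X (0, ζ) 0 = 0 := by linarith [hv0, hv1]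
    have hv1z : X (0, ζ) 1 = 0 := by linarith [hv0, hv1]
    have h20 : rot 2 0 π ζ = -ζ := by
      funext i
      by_cases h1 : i = 2
      · subst h1
        rw [rot_apply_a, Real.cos_pi, Real.sin_pi, hζ0]
        simp
      · by_cases h2 : i = 0
        · subst h2
          rw [rot_apply_b 2 0 (by decide), Real.cos_pi, Real.sin_pi, hζ2, hζ0]
          simp [hζ0]
        · rw [rot_apply_other 2 0 i h1 h2]
          have : ζ i = 0 := by
            have h3 : i = 1 := by omega
            rw [h3, hζ1]
          rw [this]
          simp [this]
    have heq2 := equivariance (fun q => X (0, q)) hgd hPDE 2 0 (by decide) π ζ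
    rw [h20, hgT ζ] at heq2
    have hv2z : X (0, ζ) 2 = 0 := by
      have := congrFun heq2 2
      rw [rot_apply_a, Real.cos_pi, Real.sin_pi] at this
      linarith [this]
    funext i
    by_cases h1 : i = 0
    · subst h1; exact hv0z
    · by_cases h2 : i = 1
      · subst h2; exact hv1z
      · have h3 : i = 2 := by omega
        subst h3; exact hv2z
  -- Step 6 : g vanishes everywhere
  have claimB : ∀ q : Fin 3 → ℝ, X (0, q) = 0 := by
    intro q
    by_cases hρ0 : q 0 ^ 2 + q 1 ^ 2 = 0
    · have h0 : q 0 = 0 := by nlinarith [sq_nonneg (q 0), sq_nonneg (q 1)]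
      have h1 : q 1 = 0 := by nlinarith [sq_nonneg (q 0), sq_nonneg (q 1)]
      have hq' : q = fun i : Fin 3 => if i = 2 then q 2 else 0 := by
        funext i
        by_cases hi0 : i = 0
        · subst hi0; simp [h0]
        · by_cases hi1 : i = 1
          · subst hi1; simp [h1]
          · have hi2 : i = 2 := by omega
            subst hi2; simp
      rw [hq']
      exact claimA (q 2)
    · have hρpos : 0 < q 0 ^ 2 + q 1 ^ 2 :=
        lt_of_le_of_ne (by positivity) (Ne.symm hρ0)
      set ρ : ℝ := Real.sqrt (q 0 ^ 2 + q 1 ^ 2) with hρdef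
      set r : ℝ := Real.sqrt (q 0 ^ 2 + q 1 ^ 2 + q 2 ^ 2) with hrdef
      have hρ : 0 < ρ := Real.sqrt_pos.mpr hρpos
      have hr : 0 < r := Real.sqrt_pos.mpr (by nlinarith [sq_nonneg (q 2)])
      have hρsq : ρ ^ 2 = q 0 ^ 2 + q 1 ^ 2 := Real.sq_sqrt (le_of_lt hρpos)
      have hrsq : r ^ 2 = q 0 ^ 2 + q 1 ^ 2 + q 2 ^ 2 := Real.sq_sqrt (by positivity)
      set θ : ℝ := Real.arccos (q 2 / r) with hθdef
      have hq2r : -1 ≤ q 2 / r ∧ q 2 / r ≤ 1 := by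
        constructor
        · rw [le_div_iff₀ hr]
          nlinarith [sq_nonneg (r + q 2), sq_nonneg (q 0), sq_nonneg (q 1)]
        · rw [div_le_one hr]
          nlinarith [sq_nonneg (r - q 2), sq_nonneg (q 0), sq_nonneg (q 1)]
      have hcosθ : Real.cos θ = q 2 / r := Real.cos_arccos hq2r.1 hq2r.2
      have hrne : r ≠ 0 := ne_of_gt hr
      have hρne : ρ ≠ 0 := ne_of_gt hρ
      have hsub : (1 : ℝ) - (q 2 / r) ^ 2 = (ρ / r) ^ 2 := by
        field_simp
        linear_combination hrsq - hρsq
      have hsinθ : Real.sin θ = ρ / r := by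
        rw [hθdef, Real.sin_arccos, hsub]
        exact Real.sqrt_sq (by positivity)
      have hq0ρ : -1 ≤ q 0 / ρ ∧ q 0 / ρ ≤ 1 := by
        constructor
        · rw [le_div_iff₀ hρ]
          nlinarith [sq_nonneg (ρ + q 0), sq_nonneg (q 1)]
        · rw [div_le_one hρ]
          nlinarith [sq_nonneg (ρ - q 0), sq_nonneg (q 1)]
      set φ : ℝ := if 0 ≤ q 1 then Real.arccos (q 0 / ρ) else -Real.arccos (q 0 / ρ) with hφdef
      have hcosφ : Real.cos φ = q 0 / ρ := by
        rw [hφdef]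
        split_ifs
        · exact Real.cos_arccos hq0ρ.1 hq0ρ.2
        · rw [Real.cos_neg]; exact Real.cos_arccos hq0ρ.1 hq0ρ.2
      have h1c : (1 : ℝ) - (q 0 / ρ) ^ 2 = (q 1 / ρ) ^ 2 := by
        field_simp
        linear_combination hρsq
      have hsinφ : Real.sin φ = q 1 / ρ := by
        rw [hφdef]
        split_ifs with hs
        · rw [Real.sin_arccos, h1c]
          exact Real.sqrt_sq (by positivity)
        · push_neg at hs
          rw [Real.sin_neg, Real.sin_arccos, h1c, Real.sqrt_sq_eq_abs,
            abs_of_nonpos (by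
              apply div_nonpos_of_nonpos_of_nonneg (le_of_lt hs) (le_of_lt hρ))]
          ring
      set ζ : Fin 3 → ℝ := fun i : Fin 3 => if i = 2 then r else 0 with hζ
      have hζ2 : ζ 2 = r := by simp [hζ]
      have hζ0 : ζ 0 = 0 := by simp [hζ]
      have hζ1 : ζ 1 = 0 := by simp [hζ]
      have hw2 : rot 2 0 θ ζ 2 = q 2 := by
        rw [rot_apply_a, hζ2, hζ0, hcosθ]
        field_simp
        ring
      have hw0 : rot 2 0 θ ζ 0 = ρ := by
        rw [rot_apply_b 2 0 (by decide), hζ2, hζ0, hsinθ]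
        field_simp
        ring
      have hw1 : rot 2 0 θ ζ 1 = 0 := by
        rw [rot_apply_other 2 0 1 (by decide) (by decide), hζ1]
      have hpoint : rot 0 1 φ (rot 2 0 θ ζ) = q := by
        funext i
        by_cases h1 : i = 0
        · subst h1
          rw [rot_apply_a, hw0, hw1, hcosφ]
          field_simp
          ring
        · by_cases h2 : i = 1
          · subst h2
            rw [rot_apply_b 0 1 (by decide), hw0, hw1, hsinφ]
            field_simp
            ring
          · have h3 : i = 2 := by omega
            subst h3
            rw [rot_apply_other 0 1 2 (by decide) (by decide), hw2]
      calc X (0, q) = X (0, rot 0 1 φ (rot 2 0 θ ζ)) := by rw [hpoint]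
        _ = rot 0 1 φ (X (0, rot 2 0 θ ζ)) :=
            equivariance (fun q => X (0, q)) hgd hPDE 0 1 (by decide) φ _
        _ = rot 0 1 φ (rot 2 0 θ (X (0, ζ))) := by
            rw [equivariance (fun q => X (0, q)) hgd hPDE 2 0 (by decide) θ ζ]
        _ = 0 := by rw [claimA r, rot_zero_vec, rot_zero_vec]
  -- conclusion
  intro z
  funext c
  rw [hsplit z c, claimB z.2]
  simp
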